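/- Monotone dissipativity of J (used in Lemmas 1 and 3). Assume each f_i is convex and L̄ is symmetric positive semidefinite. If S* = (X*,Λ*,Z*) is an equilibrium point, then ⟨S - S*, J(S)⟩ ≤ 0 for every triple S = (X,Λ,Z) with x_i ∈ Ω_i for all i. -/

import Mathlib

open scoped BigOperators RealInnerProductSpace

lemma grad_mono' {F : Type*} [NormedAddCommGroup F] [InnerProductSpace ℝ F] [CompleteSpace F]
    {f : F → ℝ} (hdiff : Differentiable ℝ f) (hconv : ConvexOn ℝ Set.univ f)
    (a b : F) : ⟪gradient f a, b - a⟫ ≤ ⟪gradient f b, b - a⟫ := by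
  set γ : ℝ → F := fun t => a + t • (b - a) with hγ
  have hγd : ∀ t : ℝ, HasDerivAt γ (b - a) t := by
    intro t
    simpa [hγ] using ((hasDerivAt_id t).smul_const (b - a)).const_add a
  have hgd : ∀ t : ℝ, HasDerivAt (f ∘ γ) ⟪gradient f (γ t), b - a⟫ t := by
    intro t
    have hf : HasFDerivAt f (InnerProductSpace.toDual ℝ F (gradient f (γ t))) (γ t) :=
      (hdiff (γ t)).hasGradientAt
    simpa [InnerProductSpace.toDual_apply_apply] using hf.comp_hasDerivAt t (hγd t)
  have hconv' : ConvexOn ℝ Set.univ (f ∘ γ) := by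
    have h2 : ConvexOn ℝ (⇑(AffineMap.lineMap a b : ℝ →ᵃ[ℝ] F) ⁻¹' Set.univ)
        (f ∘ ⇑(AffineMap.lineMap a b : ℝ →ᵃ[ℝ] F)) :=
      ConvexOn.comp_affineMap _ hconv
    have hγeq : γ = ⇑(AffineMap.lineMap a b : ℝ →ᵃ[ℝ] F) := by
      funext t; simp [γ, AffineMap.lineMap_apply]; abel
    rw [hγeq]; simpa using h2
  have hmono := hconv'.monotoneOn_deriv (fun t _ => (hgd t).differentiableAt)
  have h01 := hmono (Set.mem_univ (0:ℝ)) (Set.mem_univ (1:ℝ)) zero_le_one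
  rw [(hgd 0).deriv, (hgd 1).deriv] at h01
  simpa [γ] using h01

lemma psd_sum' {n m : ℕ} (L : Matrix (Fin n) (Fin n) ℝ) (h : L.PosSemidef)
    (u : Fin n → EuclideanSpace ℝ (Fin m)) :
    0 ≤ ∑ i, ⟪u i, ∑ j, L i j • u j⟫ := by
  have step1 : ∑ i, ⟪u i, ∑ j, L i j • u j⟫
      = ∑ i, ∑ j, ∑ k, L i j * (u i k * u j k) := by
    simp only [inner_sum, real_inner_smul_right, PiLp.inner_apply, RCLike.inner_apply,
      starRingEnd_apply, star_trivial, Finset.mul_sum, PiLp.smul_apply, smul_eq_mul]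
    exact Finset.sum_congr rfl fun i _ => Finset.sum_congr rfl fun j _ =>
      Finset.sum_congr rfl fun k _ => by ring
  have step2 : ∑ i, ∑ j, ∑ k : Fin m, L i j * (u i k * u j k)
      = ∑ k : Fin m, ∑ i, ∑ j, L i j * (u i k * u j k) := by
    calc ∑ i, ∑ j, ∑ k : Fin m, L i j * (u i k * u j k)
        = ∑ i, ∑ k : Fin m, ∑ j, L i j * (u i k * u j k) :=
          Finset.sum_congr rfl fun i _ => Finset.sum_comm
      _ = ∑ k : Fin m, ∑ i, ∑ j, L i j * (u i k * u j k) := Finset.sum_comm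
  rw [step1, step2]
  apply Finset.sum_nonneg
  intro k _
  have h2 := h.dotProduct_mulVec_nonneg (fun i => u i k)
  simpa [dotProduct, Matrix.mulVec, Finset.mul_sum, mul_assoc, mul_left_comm] using h2

lemma cross_cancel' {n m : ℕ} (L : Matrix (Fin n) (Fin n) ℝ) (hsym : ∀ i j, L i j = L j i)
    (v w : Fin n → EuclideanSpace ℝ (Fin m)) :
    ∑ i, ⟪v i, ∑ j, L i j • w j⟫ = ∑ i, ⟪w i, ∑ j, L i j • v j⟫ := by
  calc ∑ i, ⟪v i, ∑ j, L i j • w j⟫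
      = ∑ i, ∑ j, L i j * ⟪v i, w j⟫ := by
        simp only [inner_sum, real_inner_smul_right]
    _ = ∑ j, ∑ i, L i j * ⟪v i, w j⟫ := Finset.sum_comm
    _ = ∑ i, ∑ j, L i j * ⟪w i, v j⟫ := by
        refine Finset.sum_congr rfl fun a _ => Finset.sum_congr rfl fun b _ => ?_
        rw [hsym b a, real_inner_comm]
    _ = ∑ i, ⟪w i, ∑ j, L i j • v j⟫ := by
        simp only [inner_sum, real_inner_smul_right]

lemma inner_id' {F : Type*} [NormedAddCommGroup F] [InnerProductSpace ℝ F]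
    (u l ls gg ggs P Q w : F) :
    ⟪u, -gg + l⟫ + ⟪l - ls, -u - (P + Q)⟫ + ⟪w, P⟫
      = ⟪u, ggs - gg⟫ + ⟪ls - ggs, u⟫ - ⟪l - ls, P⟫ + (⟪w, P⟫ - ⟪l - ls, Q⟫) := by
  simp only [inner_add_right, inner_sub_left, inner_sub_right, inner_neg_right]
  linear_combination real_inner_comm l u - real_inner_comm ggs u

/-- **Monotone dissipativity of `J`** (used in Lemmas 1 and 3).
If each `fᵢ` is convex and `L̄` is symmetric positive semidefinite, and
`S* = (X*,Λ*,Z*)` is an equilibrium point, then `⟨S - S*, J(S)⟩ ≤ 0` for every triple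
`S = (X,Λ,Z)` with `xᵢ ∈ Ωᵢ`; the inner product `⟨S - S*, J(S)⟩` is written out blockwise. -/
theorem monotone_dissipativity_J
    (n m : ℕ) (hn : 0 < n)
    (f : Fin n → EuclideanSpace ℝ (Fin m) → ℝ)
    (hdiff : ∀ i, Differentiable ℝ (f i))
    (hconv : ∀ i, ConvexOn ℝ Set.univ (f i))
    (Ω : Fin n → Set (EuclideanSpace ℝ (Fin m)))
    (hΩne : ∀ i, (Ω i).Nonempty) (hΩcl : ∀ i, IsClosed (Ω i))
    (hΩconv : ∀ i, Convex ℝ (Ω i))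
    (d : Fin n → EuclideanSpace ℝ (Fin m))
    (Lbar : Matrix (Fin n) (Fin n) ℝ) (hpsd : Lbar.PosSemidef)
    -- the equilibrium point S* = (X*, Λ*, Z*)
    (xs lams zs : Fin n → EuclideanSpace ℝ (Fin m))
    (heq_mem : ∀ i, xs i ∈ Ω i)
    (heq_nc : ∀ i, ∀ y ∈ Ω i, ⟪lams i - gradient (f i) (xs i), y - xs i⟫ ≤ 0)
    (heq_lam : ∀ i, ∑ j, Lbar i j • (lams j + zs j) = d i - xs i)
    (heq_z : ∀ i, ∑ j, Lbar i j • lams j = 0)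
    -- an arbitrary triple S = (X, Λ, Z) with xᵢ ∈ Ωᵢ
    (x lam z : Fin n → EuclideanSpace ℝ (Fin m))
    (hx_mem : ∀ i, x i ∈ Ω i) :
    ∑ i, (⟪x i - xs i, -gradient (f i) (x i) + lam i⟫
        + ⟪lam i - lams i, d i - x i - ∑ j, Lbar i j • (lam j + z j)⟫
        + ⟪z i - zs i, ∑ j, Lbar i j • lam j⟫)
      ≤ 0 := by
  have hsym : ∀ i j, Lbar i j = Lbar j i := fun i j => by
    simpa using (hpsd.1.apply i j).symm
  have h1 : ∀ i, d i - x i - ∑ j, Lbar i j • (lam j + z j)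
      = -(x i - xs i) - ((∑ j, Lbar i j • (lam j - lams j)) + ∑ j, Lbar i j • (z j - zs j)) := by
    intro i
    have hd : d i = xs i + ∑ j, Lbar i j • (lams j + zs j) := by
      rw [heq_lam i]; abel
    rw [hd]
    simp only [smul_add, smul_sub, Finset.sum_add_distrib, Finset.sum_sub_distrib]
    abel
  have h2 : ∀ i, ∑ j, Lbar i j • lam j = ∑ j, Lbar i j • (lam j - lams j) := by
    intro i
    have h : ∑ j, Lbar i j • (lam j - lams j)
        = (∑ j, Lbar i j • lam j) - ∑ j, Lbar i j • lams j := by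
      simp only [smul_sub, Finset.sum_sub_distrib]
    rw [h, heq_z i, sub_zero]
  have hterm : ∀ i, ⟪x i - xs i, -gradient (f i) (x i) + lam i⟫
        + ⟪lam i - lams i, d i - x i - ∑ j, Lbar i j • (lam j + z j)⟫
        + ⟪z i - zs i, ∑ j, Lbar i j • lam j⟫
      = ⟪x i - xs i, gradient (f i) (xs i) - gradient (f i) (x i)⟫
        + ⟪lams i - gradient (f i) (xs i), x i - xs i⟫
        - ⟪lam i - lams i, ∑ j, Lbar i j • (lam j - lams j)⟫
        + (⟪z i - zs i, ∑ j, Lbar i j • (lam j - lams j)⟫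
            - ⟪lam i - lams i, ∑ j, Lbar i j • (z j - zs j)⟫) := by
    intro i
    rw [h1 i, h2 i]
    exact inner_id' _ _ _ _ _ _ _ _
  rw [Finset.sum_congr rfl fun i _ => hterm i]
  have expand : ∑ i, (⟪x i - xs i, gradient (f i) (xs i) - gradient (f i) (x i)⟫
        + ⟪lams i - gradient (f i) (xs i), x i - xs i⟫
        - ⟪lam i - lams i, ∑ j, Lbar i j • (lam j - lams j)⟫
        + (⟪z i - zs i, ∑ j, Lbar i j • (lam j - lams j)⟫
            - ⟪lam i - lams i, ∑ j, Lbar i j • (z j - zs j)⟫))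
      = (∑ i, ⟪x i - xs i, gradient (f i) (xs i) - gradient (f i) (x i)⟫)
        + (∑ i, ⟪lams i - gradient (f i) (xs i), x i - xs i⟫)
        - (∑ i, ⟪lam i - lams i, ∑ j, Lbar i j • (lam j - lams j)⟫)
        + ((∑ i, ⟪z i - zs i, ∑ j, Lbar i j • (lam j - lams j)⟫)
            - ∑ i, ⟪lam i - lams i, ∑ j, Lbar i j • (z j - zs j)⟫) := by
    simp only [Finset.sum_add_distrib, Finset.sum_sub_distrib]
  rw [expand]
  have hc : ∑ i, ⟪z i - zs i, ∑ j, Lbar i j • (lam j - lams j)⟫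
      = ∑ i, ⟪lam i - lams i, ∑ j, Lbar i j • (z j - zs j)⟫ :=
    cross_cancel' Lbar hsym (fun i => z i - zs i) (fun i => lam i - lams i)
  rw [hc, sub_self, add_zero]
  have hS1 : ∑ i, ⟪x i - xs i, gradient (f i) (xs i) - gradient (f i) (x i)⟫ ≤ 0 := by
    apply Finset.sum_nonpos
    intro i _
    have h := grad_mono' (hdiff i) (hconv i) (xs i) (x i)
    rw [inner_sub_right]
    have c1 := real_inner_comm (gradient (f i) (xs i)) (x i - xs i)
    have c2 := real_inner_comm (gradient (f i) (x i)) (x i - xs i)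
    linarith
  have hS2 : ∑ i, ⟪lams i - gradient (f i) (xs i), x i - xs i⟫ ≤ 0 :=
    Finset.sum_nonpos fun i _ => heq_nc i (x i) (hx_mem i)
  have hS3 : 0 ≤ ∑ i, ⟪lam i - lams i, ∑ j, Lbar i j • (lam j - lams j)⟫ :=
    psd_sum' Lbar hpsd (fun i => lam i - lams i)
  linarith
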